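/- Let q be a real number with 0 < q < 1, let c₀, d₀ be real numbers with 0 < c₀ ≤ d₀ and c₀ d₀ = 1, and let ν₀ be a nonzero real number with ν₀ q^{2k} ≠ q c₀ and ν₀ q^{2k} ≠ q d₀ for all k ∈ ℤ. On the ℂ-vector space of Laurent polynomials in ζ over ℂ, define X(ζ^k) = ν₀ q^{-2k} ζ^k, Z = multiplication by ζ, Y = Z∘(q^{-1}X − c₀·id), and Ŷ = −Z^{-1}∘(qX − d₀·id) where Z^{-1} is multiplication by ζ^{-1}. Then there exists a positive-definite Hermitian inner product ⟨·,·⟩ on the Laurent polynomials satisfying ⟨X f, g⟩ = ⟨f, X g⟩ and ⟨Y f, g⟩ = −⟨f, Ŷ g⟩ for all Laurent polynomials f, g, if and only if no point of the geometric progression {ν₀ q^{2k} : k ∈ ℤ} lies in the open interval (q c₀, q d₀). -/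

import Mathlib

open LaurentPolynomial

private theorem lp_coeff_shift (L : LaurentPolynomial ℂ →ₗ[ℂ] LaurentPolynomial ℂ) (μ : ℤ → ℂ)
    (s : ℤ) (hL : ∀ n, L (T n) = μ n • T (n + s)) (f : LaurentPolynomial ℂ) (k : ℤ) :
    (L f).coeff k = μ (k - s) * f.coeff (k - s) := by
  refine AddMonoidAlgebra.induction_linear f ?_ ?_ ?_
  · simp
  · intro f g hf hg
    rw [map_add, AddMonoidAlgebra.coeff_add, AddMonoidAlgebra.coeff_add, Finsupp.add_apply,
      Finsupp.add_apply, hf, hg]; ring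
  · intro m r
    rw [single_eq_C_mul_T, ← smul_eq_C_mul, map_smul, hL]
    simp only [AddMonoidAlgebra.coeff_smul_apply, T_apply, smul_eq_mul]
    by_cases h : m + s = k
    · subst h; simp; ring
    · rw [if_neg h, if_neg (by omega)]; ring

private theorem lp_exists_pos_seq (r : ℤ → ℝ) (hr : ∀ k, 0 < r k) :
    ∃ h : ℤ → ℝ, (∀ k, 0 < h k) ∧ ∀ k, h (k + 1) = r k * h k := by
  refine ⟨fun k => (∏ j ∈ Finset.range k.toNat, r j) *
      (∏ j ∈ Finset.range (-k).toNat, r (-1 - j))⁻¹, fun k => ?_, fun k => ?_⟩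
  · exact mul_pos (Finset.prod_pos fun j _ => hr j)
      (inv_pos.mpr (Finset.prod_pos fun j _ => hr _))
  · dsimp only
    rcases le_or_gt 0 k with hk | hk
    · have h1 : (k + 1).toNat = k.toNat + 1 := by omega
      have h2 : (-k).toNat = 0 := by omega
      have h3 : (-(k + 1)).toNat = 0 := by omega
      rw [h1, h2, h3, Finset.prod_range_succ]
      have : ((k.toNat : ℤ)) = k := by omega
      rw [this]
      simp; ring
    · have h1 : (k + 1).toNat = 0 := by omega
      have h2 : k.toNat = 0 := by omega
      have h3 : (-k).toNat = (-(k + 1)).toNat + 1 := by omega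
      rw [h1, h2, h3, Finset.prod_range_succ]
      have h4 : (-1 - ((-(k + 1)).toNat : ℤ)) = k := by omega
      rw [h4]
      have := (hr k).ne'
      field_simp

private theorem lp_sum_ext {F : ℤ → ℂ} {A B : Finset ℤ} (hA : ∀ k, F k ≠ 0 → k ∈ A)
    (hB : ∀ k, F k ≠ 0 → k ∈ B) : ∑ k ∈ A, F k = ∑ k ∈ B, F k := by
  rw [Finset.sum_subset (Finset.subset_union_left : A ⊆ A ∪ B)
      (fun k _ hk => by_contra fun h => hk (hA k h)),
    Finset.sum_subset (Finset.subset_union_right : B ⊆ A ∪ B)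
      (fun k _ hk => by_contra fun h => hk (hB k h))]

private theorem lp_T_ne_zero (n : ℤ) : (T n : LaurentPolynomial ℂ) ≠ 0 := by
  intro h
  have := congrArg (fun f : LaurentPolynomial ℂ => f.coeff n) h
  simp at this

private noncomputable def Arf (q c₀ ν₀ : ℝ) (n : ℤ) : ℝ := q⁻¹ * (ν₀ * q ^ (-(2 * n))) - c₀

private noncomputable def Brf (q d₀ ν₀ : ℝ) (n : ℤ) : ℝ := q * (ν₀ * q ^ (-(2 * (n + 1)))) - d₀

private theorem q_mul_Arf {q : ℝ} (hq : q ≠ 0) (c₀ ν₀ : ℝ) (n : ℤ) :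
    q * Arf q c₀ ν₀ n = ν₀ * q ^ (-(2 * n)) - q * c₀ := by
  unfold Arf; field_simp

private theorem q_mul_Brf {q : ℝ} (hq : q ≠ 0) (d₀ ν₀ : ℝ) (n : ℤ) :
    q * Brf q d₀ ν₀ n = ν₀ * q ^ (-(2 * n)) - q * d₀ := by
  unfold Brf
  have e : q * (q * (ν₀ * q ^ (-(2 * (n + 1))))) = ν₀ * q ^ (-(2 * n)) := by
    rw [show (-(2 * n)) = 1 + (1 + (-(2 * (n + 1)))) by ring, zpow_add₀ hq, zpow_add₀ hq,
      zpow_one]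
    ring
  linear_combination e

/-- the module `Π_ν` over the quantum algebra of functions on the
quantum two-sheet hyperboloid or cone `X_{c₀,d₀}` (realized on Laurent
polynomials by the operators `X`, `Y`, `Ŷ`) is unitarizable — i.e. admits a
positive-definite Hermitian inner product with `X` symmetric and `−Ŷ` adjoint
to `Y` — if and only if the geometric progression `{ν₀q^{2k}}` avoids the open
interval `(qc₀, qd₀)`. -/
theorem quantum_hyperboloid_unitarizable_iff
    (q : ℝ) (hq0 : 0 < q) (hq1 : q < 1)
    (c₀ d₀ : ℝ) (hc : 0 < c₀) (hcd : c₀ ≤ d₀) (hcd1 : c₀ * d₀ = 1)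
    (ν₀ : ℝ) (hν : ν₀ ≠ 0)
    (h1 : ∀ k : ℤ, ν₀ * q ^ (2 * k) ≠ q * c₀)
    (h2 : ∀ k : ℤ, ν₀ * q ^ (2 * k) ≠ q * d₀)
    (X Z Z' Y Yh : LaurentPolynomial ℂ →ₗ[ℂ] LaurentPolynomial ℂ)
    (hX : ∀ k : ℤ, X (T k) = ((ν₀ : ℂ) * (q : ℂ) ^ (-(2 * k))) • T k)
    (hZ : ∀ f : LaurentPolynomial ℂ, Z f = T 1 * f)
    (hZ' : ∀ f : LaurentPolynomial ℂ, Z' f = T (-1) * f)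
    (hY : Y = Z ∘ₗ (((q : ℂ))⁻¹ • X - (c₀ : ℂ) • LinearMap.id))
    (hYh : Yh = -(Z' ∘ₗ ((q : ℂ) • X - (d₀ : ℂ) • LinearMap.id))) :
    (∃ inner : LaurentPolynomial ℂ → LaurentPolynomial ℂ → ℂ,
      (∀ f g, inner f g = starRingEnd ℂ (inner g f)) ∧
      (∀ (a : ℂ) f g, inner (a • f) g = a * inner f g) ∧
      (∀ f₁ f₂ g, inner (f₁ + f₂) g = inner f₁ g + inner f₂ g) ∧
      (∀ f, f ≠ 0 → 0 < (inner f f).re) ∧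
      (∀ f g, inner (X f) g = inner f (X g)) ∧
      (∀ f g, inner (Y f) g = -inner f (Yh g))) ↔
    (∀ k : ℤ, ν₀ * q ^ (2 * k) ∉ Set.Ioo (q * c₀) (q * d₀)) := by
  have hq := hq0.ne'
  -- real eigenvalue cast
  have hXT : ∀ n : ℤ, X (T n) = (((ν₀ * q ^ (-(2 * n)) : ℝ)) : ℂ) • T n := by
    intro n
    rw [hX]
    congr 1
    push_cast
    ring
  have hYT : ∀ n : ℤ, Y (T n) = ((Arf q c₀ ν₀ n : ℝ) : ℂ) • T (n + 1) := by
    intro n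
    rw [hY, LinearMap.comp_apply, LinearMap.sub_apply, LinearMap.smul_apply,
      LinearMap.smul_apply, LinearMap.id_apply, hXT, hZ, smul_smul, ← sub_smul,
      mul_smul_comm, ← T_add]
    rw [add_comm 1 n]
    congr 1
    unfold Arf
    push_cast
    ring
  have hYhT : ∀ n : ℤ, Yh (T n) = (((d₀ - q * (ν₀ * q ^ (-(2 * n))) : ℝ)) : ℂ) • T (n + (-1)) := by
    intro n
    rw [hYh, LinearMap.neg_apply, LinearMap.comp_apply, LinearMap.sub_apply,
      LinearMap.smul_apply, LinearMap.smul_apply, LinearMap.id_apply, hXT, hZ', smul_smul,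
      ← sub_smul, mul_smul_comm, ← T_add, ← neg_smul]
    rw [add_comm (-1) n]
    congr 1
    push_cast
    ring
  -- coefficient formulas
  have cX : ∀ (f : LaurentPolynomial ℂ) (k : ℤ),
      (X f).coeff k = ((ν₀ * q ^ (-(2 * k)) : ℝ) : ℂ) * f.coeff k := by
    intro f k
    have := lp_coeff_shift X (fun n => ((ν₀ * q ^ (-(2 * n)) : ℝ) : ℂ)) 0
      (fun n => by rw [add_zero]; exact hXT n) f k
    simpa using this
  have cY : ∀ (f : LaurentPolynomial ℂ) (k : ℤ),
      (Y f).coeff k = ((Arf q c₀ ν₀ (k - 1) : ℝ) : ℂ) * f.coeff (k - 1) :=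
    fun f k => lp_coeff_shift Y (fun n => ((Arf q c₀ ν₀ n : ℝ) : ℂ)) 1 hYT f k
  have cYh : ∀ (f : LaurentPolynomial ℂ) (k : ℤ),
      (Yh f).coeff k = (((d₀ - q * (ν₀ * q ^ (-(2 * (k + 1)))) : ℝ)) : ℂ) * f.coeff (k + 1) := by
    intro f k
    have := lp_coeff_shift Yh (fun n => (((d₀ - q * (ν₀ * q ^ (-(2 * n))) : ℝ)) : ℂ)) (-1)
      hYhT f k
    simpa [sub_neg_eq_add] using this
  -- nonvanishing of Arf, Brf
  have hAr0 : ∀ n : ℤ, Arf q c₀ ν₀ n ≠ 0 := by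
    intro n hA
    have e1 := h1 (-n)
    rw [show 2 * (-n) = -(2 * n) by ring] at e1
    have := q_mul_Arf hq c₀ ν₀ n
    rw [hA, mul_zero] at this
    exact e1 (by linarith)
  have hBr0 : ∀ n : ℤ, Brf q d₀ ν₀ n ≠ 0 := by
    intro n hB
    have e2 := h2 (-n)
    rw [show 2 * (-n) = -(2 * n) by ring] at e2
    have := q_mul_Brf hq d₀ ν₀ n
    rw [hB, mul_zero] at this
    exact e2 (by linarith)
  constructor
  · rintro ⟨ip, herm, hsmul, hadd, hpos, hXs, hYs⟩ m hmem
    rw [Set.mem_Ioo] at hmem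
    obtain ⟨hm1, hm2⟩ := hmem
    have hre : ∀ j : ℤ, 0 < (ip (T j) (T j)).re := fun j => hpos _ (lp_T_ne_zero j)
    have hconj : ∀ (a : ℂ) f g, ip f (a • g) = (starRingEnd ℂ) a * ip f g := by
      intro a f g
      rw [herm, hsmul, map_mul, ← herm]
    have key := hYs (T (-m)) (T (-m + 1))
    have e := hYhT (-m + 1)
    rw [show (-m : ℤ) + 1 + (-1) = -m by ring] at e
    rw [hYT (-m), hsmul, e, hconj] at key
    have keyre := congrArg Complex.re key
    simp only [Complex.conj_ofReal, Complex.re_ofReal_mul, Complex.neg_re] at keyre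
    -- keyre : Arf q c₀ ν₀ (-m) * (ip (T (-m+1)) (T (-m+1))).re
    --       = -((d₀ - q * (ν₀ * q ^ (-(2 * (-m+1))))) * (ip (T (-m)) (T (-m))).re)
    have hA := q_mul_Arf hq c₀ ν₀ (-m)
    have hB := q_mul_Brf hq d₀ ν₀ (-m)
    rw [show -(2 * (-m : ℤ)) = 2 * m by ring] at hA hB
    have hArpos : 0 < Arf q c₀ ν₀ (-m) := by nlinarith
    have hBrneg : Brf q d₀ ν₀ (-m) < 0 := by nlinarith
    have hBrdef : Brf q d₀ ν₀ (-m) = q * (ν₀ * q ^ (-(2 * ((-m : ℤ) + 1)))) - d₀ := rfl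
    have hfin1 : 0 < Arf q c₀ ν₀ (-m) * (ip (T (-m + 1)) (T (-m + 1))).re :=
      mul_pos hArpos (hre _)
    have hfin2 : Brf q d₀ ν₀ (-m) * (ip (T (-m)) (T (-m))).re < 0 :=
      mul_neg_of_neg_of_pos hBrneg (hre _)
    nlinarith [keyre, hfin1, hfin2, hBrdef]
  · intro gap
    -- ratios are positive
    have hrpos : ∀ n : ℤ, 0 < Brf q d₀ ν₀ n / Arf q c₀ ν₀ n := by
      intro n
      have hA := q_mul_Arf hq c₀ ν₀ n
      have hB := q_mul_Brf hq d₀ ν₀ n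
      have e1 := h1 (-n)
      have e2 := h2 (-n)
      have hgap := gap (-n)
      rw [show 2 * (-n : ℤ) = -(2 * n) by ring] at e1 e2 hgap
      rw [Set.mem_Ioo] at hgap
      push_neg at hgap
      rcases lt_or_gt_of_ne e1 with hlt | hgt
      · have hAneg : Arf q c₀ ν₀ n < 0 := by nlinarith
        have hBneg : Brf q d₀ ν₀ n < 0 := by nlinarith
        exact div_pos_of_neg_of_neg hBneg hAneg
      · have hge := hgap hgt
        have hgt2 : q * d₀ < ν₀ * q ^ (-(2 * n)) := lt_of_le_of_ne hge (Ne.symm e2)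
        have hApos : 0 < Arf q c₀ ν₀ n := by nlinarith
        have hBpos : 0 < Brf q d₀ ν₀ n := by nlinarith
        exact div_pos hBpos hApos
    obtain ⟨h, hp, hrec⟩ := lp_exists_pos_seq _ hrpos
    have hkey : ∀ n : ℤ, Arf q c₀ ν₀ n * h (n + 1) = Brf q d₀ ν₀ n * h n := by
      intro n
      rw [hrec n]
      field_simp [hAr0 n]
    refine ⟨fun f g => ∑ k ∈ f.coeff.support ∪ g.coeff.support,
      f.coeff k * (starRingEnd ℂ) (g.coeff k) * ((h k : ℝ) : ℂ), ?_, ?_, ?_, ?_, ?_, ?_⟩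
    · -- hermitian
      intro f g
      dsimp only
      rw [map_sum, Finset.union_comm]
      refine Finset.sum_congr rfl fun k _ => ?_
      simp only [map_mul, Complex.conj_conj, Complex.conj_ofReal]
      ring
    · -- scalar
      intro a f g
      dsimp only
      rw [Finset.mul_sum]
      have step : ∑ k ∈ (a • f).coeff.support ∪ g.coeff.support,
          (a • f).coeff k * (starRingEnd ℂ) (g.coeff k) * ((h k : ℝ) : ℂ)
          = ∑ k ∈ f.coeff.support ∪ g.coeff.support,
          (a • f).coeff k * (starRingEnd ℂ) (g.coeff k) * ((h k : ℝ) : ℂ) := by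
        refine lp_sum_ext (fun k hk => ?_) (fun k hk => ?_)
        · exact Finset.mem_union_left _ (Finsupp.mem_support_iff.mpr
            (fun h0 => hk (by rw [h0]; ring)))
        · refine Finset.mem_union_left _ (Finsupp.mem_support_iff.mpr (fun h0 => hk ?_))
          rw [AddMonoidAlgebra.coeff_smul_apply, h0, smul_zero]; ring
      rw [step]
      refine Finset.sum_congr rfl fun k _ => ?_
      rw [AddMonoidAlgebra.coeff_smul_apply, smul_eq_mul]
      ring
    · -- additive
      intro f₁ f₂ g
      dsimp only
      have s1 : ∑ k ∈ (f₁ + f₂).coeff.support ∪ g.coeff.support,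
          (f₁ + f₂).coeff k * (starRingEnd ℂ) (g.coeff k) * ((h k : ℝ) : ℂ)
          = ∑ k ∈ (f₁.coeff.support ∪ f₂.coeff.support) ∪ g.coeff.support,
          (f₁ + f₂).coeff k * (starRingEnd ℂ) (g.coeff k) * ((h k : ℝ) : ℂ) := by
        refine lp_sum_ext (fun k hk => ?_) (fun k hk => ?_)
        · exact Finset.mem_union_left _ (Finsupp.mem_support_iff.mpr
            (fun h0 => hk (by rw [h0]; ring)))
        · have h0 : (f₁ + f₂).coeff k ≠ 0 :=
            fun h0 => hk (by rw [h0]; ring)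
          rw [AddMonoidAlgebra.coeff_add, Finsupp.add_apply] at h0
          have hor : f₁.coeff k ≠ 0 ∨ f₂.coeff k ≠ 0 := by
            by_contra hcc
            push_neg at hcc
            rw [hcc.1, hcc.2, add_zero] at h0
            exact h0 rfl
          rcases hor with hne | hne
          · exact Finset.mem_union_left _ (Finset.mem_union_left _
              (Finsupp.mem_support_iff.mpr hne))
          · exact Finset.mem_union_left _ (Finset.mem_union_right _
              (Finsupp.mem_support_iff.mpr hne))
      have s2 : ∑ k ∈ f₁.coeff.support ∪ g.coeff.support,
          f₁.coeff k * (starRingEnd ℂ) (g.coeff k) * ((h k : ℝ) : ℂ)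
          = ∑ k ∈ (f₁.coeff.support ∪ f₂.coeff.support) ∪ g.coeff.support,
          f₁.coeff k * (starRingEnd ℂ) (g.coeff k) * ((h k : ℝ) : ℂ) := by
        refine lp_sum_ext (fun k hk => ?_) (fun k hk => ?_) <;>
          exact Finset.mem_union_left _ (by
            first
            | exact Finsupp.mem_support_iff.mpr
                (fun h0 => hk (by rw [h0]; ring))
            | exact Finset.mem_union_left _ (Finsupp.mem_support_iff.mpr
                (fun h0 => hk (by rw [h0]; ring))))
      have s3 : ∑ k ∈ f₂.coeff.support ∪ g.coeff.support,
          f₂.coeff k * (starRingEnd ℂ) (g.coeff k) * ((h k : ℝ) : ℂ)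
          = ∑ k ∈ (f₁.coeff.support ∪ f₂.coeff.support) ∪ g.coeff.support,
          f₂.coeff k * (starRingEnd ℂ) (g.coeff k) * ((h k : ℝ) : ℂ) := by
        refine lp_sum_ext (fun k hk => ?_) (fun k hk => ?_)
        · exact Finset.mem_union_left _ (Finsupp.mem_support_iff.mpr
            (fun h0 => hk (by rw [h0]; ring)))
        · exact Finset.mem_union_left _ (Finset.mem_union_right _
            (Finsupp.mem_support_iff.mpr
              (fun h0 => hk (by rw [h0]; ring))))
      rw [s1, s2, s3, ← Finset.sum_add_distrib]
      refine Finset.sum_congr rfl fun k _ => ?_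
      rw [AddMonoidAlgebra.coeff_add, Finsupp.add_apply]
      ring
    · -- positive definite
      intro f hf
      dsimp only
      rw [Finset.union_self, Complex.re_sum]
      refine Finset.sum_pos (fun k hk => ?_) (Finsupp.support_nonempty_iff.mpr (AddMonoidAlgebra.coeff_eq_zero.not.mpr hf))
      rw [Complex.mul_conj, ← Complex.ofReal_mul, Complex.ofReal_re]
      exact mul_pos (Complex.normSq_pos.mpr (Finsupp.mem_support_iff.mp hk)) (hp k)
    · -- X symmetric
      intro f g
      dsimp only
      have s1 : ∑ k ∈ (X f).coeff.support ∪ g.coeff.support,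
          (X f).coeff k * (starRingEnd ℂ) (g.coeff k) * ((h k : ℝ) : ℂ)
          = ∑ k ∈ f.coeff.support ∪ g.coeff.support,
          (X f).coeff k * (starRingEnd ℂ) (g.coeff k) * ((h k : ℝ) : ℂ) := by
        refine lp_sum_ext (fun k hk => ?_) (fun k hk => ?_)
        · exact Finset.mem_union_left _ (Finsupp.mem_support_iff.mpr
            (fun h0 => hk (by rw [h0]; ring)))
        · refine Finset.mem_union_left _ (Finsupp.mem_support_iff.mpr (fun h0 => hk ?_))
          rw [cX, h0]; ring
      have s2 : ∑ k ∈ f.coeff.support ∪ (X g).coeff.support,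
          f.coeff k * (starRingEnd ℂ) ((X g).coeff k) * ((h k : ℝ) : ℂ)
          = ∑ k ∈ f.coeff.support ∪ g.coeff.support,
          f.coeff k * (starRingEnd ℂ) ((X g).coeff k) * ((h k : ℝ) : ℂ) := by
        refine lp_sum_ext (fun k hk => ?_) (fun k hk => ?_) <;>
          exact Finset.mem_union_left _ (Finsupp.mem_support_iff.mpr
            (fun h0 => hk (by rw [h0]; ring)))
      rw [s1, s2]
      refine Finset.sum_congr rfl fun k _ => ?_
      rw [cX, cX, map_mul, Complex.conj_ofReal]
      ring
    · -- Y adjoint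
      intro f g
      dsimp only
      have s1 : ∑ k ∈ (Y f).coeff.support ∪ g.coeff.support,
          (Y f).coeff k * (starRingEnd ℂ) (g.coeff k) * ((h k : ℝ) : ℂ)
          = ∑ k ∈ f.coeff.support.image (· + 1),
          (Y f).coeff k * (starRingEnd ℂ) (g.coeff k) * ((h k : ℝ) : ℂ) := by
        refine lp_sum_ext (fun k hk => ?_) (fun k hk => ?_)
        · exact Finset.mem_union_left _ (Finsupp.mem_support_iff.mpr
            (fun h0 => hk (by rw [h0]; ring)))
        · have h0 : f.coeff (k - 1) ≠ 0 := by
            intro h0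
            exact hk (by rw [cY, h0]; ring)
          exact Finset.mem_image.mpr ⟨k - 1, Finsupp.mem_support_iff.mpr h0, by ring⟩
      have s2 : ∑ k ∈ f.coeff.support ∪ (Yh g).coeff.support,
          f.coeff k * (starRingEnd ℂ) ((Yh g).coeff k) * ((h k : ℝ) : ℂ)
          = ∑ k ∈ f.coeff.support,
          f.coeff k * (starRingEnd ℂ) ((Yh g).coeff k) * ((h k : ℝ) : ℂ) := by
        refine lp_sum_ext (fun k hk => ?_) (fun k hk => ?_)
        · exact Finset.mem_union_left _ (Finsupp.mem_support_iff.mpr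
            (fun h0 => hk (by rw [h0]; ring)))
        · exact Finsupp.mem_support_iff.mpr
            (fun h0 => hk (by rw [h0]; ring))
      rw [s1, s2, Finset.sum_image (fun x _ y _ hxy => by omega), ← Finset.sum_neg_distrib]
      refine Finset.sum_congr rfl fun k _ => ?_
      rw [cY, cYh, show (k : ℤ) + 1 - 1 = k by ring]
      rw [map_mul, Complex.conj_ofReal]
      have hk := hkey k
      have hB : Brf q d₀ ν₀ k = q * (ν₀ * q ^ (-(2 * (k + 1)))) - d₀ := rfl
      rw [hB] at hk
      have := congrArg (fun x : ℝ => (x : ℂ)) hk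
      push_cast at this ⊢
      linear_combination (f.coeff k * (starRingEnd ℂ) (g.coeff (k + 1))) * this
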